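/- Suppose i is a *-invariant ideal of A with i² = 0. Fix a basis of V with Gram matrix X. Then the kernel of the canonical map U → Ū consists exactly of matrices 1 + M with M ∈ M_m(i) satisfying (M*)ᵗ X + X M = 0, and if X is diagonal with unit entries this kernel has order |i|^{m(m−1)/2} · |k|^m, where k = {a ∈ i : a + a* = 0}. -/

import Mathlib

open MulOpposite

/-- A `*`-hermitian form on a right `A`-module `V` (right modules are encoded as
modules over the opposite ring `Aᵐᵒᵖ`): it is additive and `A`-linear in the second
variable and satisfies `h v u = (h u v)*`. -/
structure HermitianForm (A V : Type*) [Ring A] [StarRing A] [AddCommGroup V]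
    [Module Aᵐᵒᵖ V] where
  toFun : V → V → A
  add_right : ∀ u v w : V, toFun u (v + w) = toFun u v + toFun u w
  smul_right : ∀ (a : A) (u v : V), toFun u (op a • v) = toFun u v * a
  conj_symm : ∀ u v : V, toFun v u = star (toFun u v)

namespace HermitianForm

variable {A V : Type*} [Ring A] [StarRing A] [AddCommGroup V] [Module Aᵐᵒᵖ V]

/-- Non-degeneracy: the map `u ↦ h u -` is a bijection of `V` onto the dual module. -/
def Nondeg (h : HermitianForm A V) : Prop :=
  ∀ φ : V →ₗ[Aᵐᵒᵖ] A, ∃! u : V, ∀ v : V, h.toFun u v = φ v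

end HermitianForm

/-- A vector of the free module `V` of rank `m` is primitive if it belongs to a basis. -/
def IsPrimitive (A : Type*) {V : Type*} [Ring A] [AddCommGroup V] [Module Aᵐᵒᵖ V]
    (m : ℕ) (v : V) : Prop :=
  ∃ (b : Module.Basis (Fin m) Aᵐᵒᵖ V) (i : Fin m), b i = v

namespace HermitianForm

variable {A V : Type*} [Ring A] [StarRing A] [AddCommGroup V] [Module Aᵐᵒᵖ V] (h : HermitianForm A V)

set_option linter.unusedSectionVars false

lemma add_left (u v w : V) : h.toFun (u + v) w = h.toFun u w + h.toFun v w := by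
  rw [h.conj_symm, h.add_right, h.conj_symm u, h.conj_symm v, ← star_add, star_star]

lemma smul_left (a : A) (u v : V) : h.toFun (op a • u) v = star a * h.toFun u v := by
  rw [h.conj_symm, h.smul_right, star_mul, ← h.conj_symm]

lemma sum_left {ι : Type*} (s : Finset ι) (f : ι → V) (v : V) :
    h.toFun (∑ i ∈ s, f i) v = ∑ i ∈ s, h.toFun (f i) v :=
  map_sum (AddMonoidHom.mk' (fun u => h.toFun u v) (fun a b => h.add_left a b v)) f s

lemma sum_right {ι : Type*} (s : Finset ι) (f : ι → V) (v : V) :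
    h.toFun v (∑ i ∈ s, f i) = ∑ i ∈ s, h.toFun v (f i) :=
  map_sum (AddMonoidHom.mk' (fun u => h.toFun v u) (fun a b => h.add_right v a b)) f s


end HermitianForm

section AuxSpan
set_option linter.unusedSectionVars false

variable {A V : Type*} [Ring A] [StarRing A] [AddCommGroup V] [Module Aᵐᵒᵖ V]
  {m : ℕ} (b : Module.Basis (Fin m) Aᵐᵒᵖ V) {I : TwoSidedIdeal A}
  (h : HermitianForm A V)

lemma expand_herm
    (hIstar : ∀ a : A, a ∈ I → star a ∈ I)
    (hIsq : ∀ a ∈ I, ∀ c ∈ I, a * c = 0)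
    (X : Matrix (Fin m) (Fin m) A)
    (hX : ∀ i j : Fin m, X i j = h.toFun (b i) (b j))
    (M : Matrix (Fin m) (Fin m) A) (hM : ∀ k l : Fin m, M k l ∈ I) (i j : Fin m) :
    h.toFun (b i + ∑ k, op (M k i) • b k) (b j + ∑ l, op (M l j) • b l) =
      X i j + (((M.map star).transpose * X + X * M) i j) := by
  rw [h.add_left, h.add_right, h.add_right, h.sum_left, h.sum_right, h.sum_right]
  have e1 : ∀ k, h.toFun (op (M k i) • b k) (b j) = star (M k i) * X k j := by
    intro k; rw [h.smul_left, hX]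
  have e2 : ∀ l, h.toFun (b i) (op (M l j) • b l) = X i l * M l j := by
    intro l; rw [h.smul_right, hX]
  have e3 : ∀ l, h.toFun (∑ k, op (M k i) • b k) (op (M l j) • b l) = 0 := by
    intro l
    rw [h.sum_left]
    apply Finset.sum_eq_zero
    intro k _
    rw [h.smul_right, h.smul_left, ← hX]
    exact hIsq _ (I.mul_mem_right _ _ (hIstar _ (hM k i))) _ (hM l j)
  simp only [e1, e2, e3, Finset.sum_const_zero, add_zero, Matrix.add_apply,
    Matrix.mul_apply, Matrix.transpose_apply, Matrix.map_apply]
  rw [hX i j]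
  abel

lemma mem_spanI_iff (v : V) :
    v ∈ Submodule.span Aᵐᵒᵖ {x : V | ∃ a ∈ I, ∃ w : V, x = op a • w} ↔
      ∀ j : Fin m, unop (b.repr v j) ∈ I := by
  constructor
  · intro hv
    have hle : Submodule.span Aᵐᵒᵖ {x : V | ∃ a ∈ I, ∃ w : V, x = op a • w} ≤
        { carrier := {v : V | ∀ j, unop (b.repr v j) ∈ I}
          add_mem' := by
            intro x y hx hy j
            simpa using I.add_mem (hx j) (hy j)
          zero_mem' := by intro j; simp [I.zero_mem]
          smul_mem' := by
            intro c x hx j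
            have hc : b.repr (c • x) j = c * b.repr x j := by simp
            rw [hc, unop_mul]
            exact I.mul_mem_right _ _ (hx j) } := by
      apply Submodule.span_le.2
      rintro x ⟨a, ha, w, rfl⟩ j
      have hc : b.repr (op a • w) j = op a * b.repr w j := by simp
      rw [hc]
      exact I.mul_mem_left _ _ ha
    exact hle hv
  · intro hv
    rw [← b.sum_repr v]
    apply Submodule.sum_mem
    intro j _
    apply Submodule.subset_span
    exact ⟨unop (b.repr v j), hv j, b j, by simp⟩

lemma iso_of_basis (g : V ≃ₗ[Aᵐᵒᵖ] V)
    (hb : ∀ i j, h.toFun (g (b i)) (g (b j)) = h.toFun (b i) (b j)) :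
    ∀ u v, h.toFun (g u) (g v) = h.toFun u v := by
  have step1 : ∀ (i : Fin m) (v : V), h.toFun (g (b i)) (g v) = h.toFun (b i) v := by
    intro i v
    conv_lhs => rw [← b.sum_repr v]
    conv_rhs => rw [← b.sum_repr v]
    rw [map_sum, h.sum_right, h.sum_right]
    apply Finset.sum_congr rfl
    intro j _
    rw [map_smul, ← op_unop (b.repr v j), h.smul_right, h.smul_right, hb]
  intro u v
  conv_lhs => rw [← b.sum_repr u]
  conv_rhs => rw [← b.sum_repr u]
  rw [map_sum, h.sum_left, h.sum_left]
  refine Finset.sum_congr rfl fun i _ => ?_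
  rw [map_smul, ← op_unop (b.repr u i), h.smul_left, h.smul_left, step1]

lemma kernel_iff
    (hIstar : ∀ a : A, a ∈ I → star a ∈ I)
    (hIsq : ∀ a ∈ I, ∀ c ∈ I, a * c = 0)
    (X : Matrix (Fin m) (Fin m) A)
    (hX : ∀ i j : Fin m, X i j = h.toFun (b i) (b j))
    (g : V ≃ₗ[Aᵐᵒᵖ] V) :
    ((∀ u v : V, h.toFun (g u) (g v) = h.toFun u v) ∧
        (∀ v : V, g v - v ∈
          Submodule.span Aᵐᵒᵖ {x : V | ∃ a ∈ I, ∃ w : V, x = op a • w})) ↔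
      (∃ M : Matrix (Fin m) (Fin m) A, (∀ k l : Fin m, M k l ∈ I) ∧
        (M.map star).transpose * X + X * M = 0 ∧
        ∀ j : Fin m, g (b j) = b j + ∑ k : Fin m, op (M k j) • b k) := by
  constructor
  · rintro ⟨hiso, hspan⟩
    set M : Matrix (Fin m) (Fin m) A :=
      Matrix.of fun k j => unop (b.repr (g (b j) - b j) k) with hMdef
    have hMI : ∀ k l : Fin m, M k l ∈ I := fun k l =>
      (mem_spanI_iff b (I := I) _).1 (hspan (b l)) k
    have hgb : ∀ j, g (b j) = b j + ∑ k, op (M k j) • b k := by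
      intro j
      have : ∑ k, op (M k j) • b k = g (b j) - b j := by
        rw [show (fun k => op (M k j) • b k) =
            fun k => (b.repr (g (b j) - b j)) k • b k from funext fun k => by
          simp [hMdef]]
        exact b.sum_repr _
      rw [this]; abel
    refine ⟨M, hMI, ?_, hgb⟩
    ext i j
    have := hiso (b i) (b j)
    rw [hgb i, hgb j, expand_herm b h hIstar hIsq X hX M hMI i j, ← hX] at this
    rw [Matrix.zero_apply]
    exact add_left_cancel (by rw [add_zero]; exact this)
  · rintro ⟨M, hMI, hMeq, hgb⟩
    have hbasis : ∀ i j, h.toFun (g (b i)) (g (b j)) = h.toFun (b i) (b j) := by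
      intro i j
      rw [hgb i, hgb j, expand_herm b h hIstar hIsq X hX M hMI i j, hMeq,
        Matrix.zero_apply, add_zero, hX]
    refine ⟨iso_of_basis b h g hbasis, ?_⟩
    intro v
    have hbj : ∀ j, g (b j) - b j ∈
        Submodule.span Aᵐᵒᵖ {x : V | ∃ a ∈ I, ∃ w : V, x = op a • w} := by
      intro j
      rw [hgb j, add_sub_cancel_left]
      apply Submodule.sum_mem
      intro k _
      exact Submodule.subset_span ⟨M k j, hMI k j, b k, rfl⟩
    have hv : g v - v = ∑ j, (b.repr v) j • (g (b j) - b j) := by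
      conv_lhs => rw [← b.sum_repr v]
      rw [map_sum]
      rw [← Finset.sum_sub_distrib]
      apply Finset.sum_congr rfl
      intro j _
      rw [map_smul, smul_sub]
    rw [hv]
    exact Submodule.sum_mem _ fun j _ => Submodule.smul_mem _ _ (hbj j)

end AuxSpan

section AuxEquiv
variable {A V : Type*} [Ring A] [AddCommGroup V] [Module Aᵐᵒᵖ V]
  {m : ℕ} (b : Module.Basis (Fin m) Aᵐᵒᵖ V) {I : TwoSidedIdeal A}

lemma exists_equiv
    (hIsq : ∀ a ∈ I, ∀ c ∈ I, a * c = 0)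
    (M : Matrix (Fin m) (Fin m) A) (hMI : ∀ k l : Fin m, M k l ∈ I) :
    ∃ g : V ≃ₗ[Aᵐᵒᵖ] V, ∀ j, g (b j) = b j + ∑ k, op (M k j) • b k := by
  set f : V →ₗ[Aᵐᵒᵖ] V := b.constr ℕ (fun j => b j + ∑ k, op (M k j) • b k) with hf
  set f' : V →ₗ[Aᵐᵒᵖ] V := b.constr ℕ (fun j => b j - ∑ k, op (M k j) • b k) with hf'
  have hfb : ∀ j, f (b j) = b j + ∑ k, op (M k j) • b k := fun j => b.constr_basis _ _ _
  have hfb' : ∀ j, f' (b j) = b j - ∑ k, op (M k j) • b k := fun j => b.constr_basis _ _ _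
  have hzero : ∀ (k j : Fin m), op (M k j) • (∑ l, op (M l k) • b l) = 0 := by
    intro k j
    rw [Finset.smul_sum]
    apply Finset.sum_eq_zero
    intro l _
    rw [smul_smul, ← op_mul, hIsq _ (hMI l k) _ (hMI k j), op_zero, zero_smul]
  refine ⟨LinearEquiv.ofLinear f f' ?_ ?_, ?_⟩
  · apply b.ext
    intro j
    rw [LinearMap.comp_apply, hfb', map_sub, hfb, map_sum, LinearMap.id_apply]
    have : ∀ k : Fin m, f (op (M k j) • b k) =
        op (M k j) • b k + op (M k j) • (∑ l, op (M l k) • b l) := by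
      intro k; rw [map_smul, hfb, smul_add]
    simp only [this, hzero, add_zero]
    abel
  · apply b.ext
    intro j
    rw [LinearMap.comp_apply, hfb, map_add, hfb', map_sum, LinearMap.id_apply]
    have : ∀ k : Fin m, f' (op (M k j) • b k) =
        op (M k j) • b k - op (M k j) • (∑ l, op (M l k) • b l) := by
      intro k; rw [map_smul, hfb', smul_sub]
    simp only [this, hzero, sub_zero]
    abel
  · intro j
    show (LinearEquiv.ofLinear f f' _ _) (b j) = _
    simp only [LinearEquiv.ofLinear_apply]
    rw [hfb]
end AuxEquiv

section ReprSum
variable {A V : Type*} [Ring A] [AddCommGroup V] [Module Aᵐᵒᵖ V]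
  {m : ℕ} (b : Module.Basis (Fin m) Aᵐᵒᵖ V)

lemma repr_sum_eq (c : Fin m → A) (k0 : Fin m) :
    b.repr (∑ k, op (c k) • b k) k0 = op (c k0) := by
  classical
  rw [map_sum, Finsupp.finset_sum_apply]
  rw [Finset.sum_eq_single k0]
  · simp
  · intro k _ hk
    simp [Module.Basis.repr_self, Finsupp.single_apply, hk]
  · simp

end ReprSum

section Count
variable {A : Type*} [Ring A] [StarRing A] {m : ℕ} {I : TwoSidedIdeal A}

lemma entry_simp (X M : Matrix (Fin m) (Fin m) A)
    (hXd : ∀ k l : Fin m, k ≠ l → X k l = 0) (i j : Fin m) :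
    ((M.map star).transpose * X + X * M) i j = star (M j i) * X j j + X i i * M i j := by
  rw [Matrix.add_apply, Matrix.mul_apply, Matrix.mul_apply]
  congr 1
  · rw [Finset.sum_eq_single j]
    · simp
    · intro k _ hk; rw [hXd k j hk, mul_zero]
    · simp
  · rw [Finset.sum_eq_single i]
    · intro l _ hl
      rw [hXd i l (Ne.symm hl), zero_mul]
    · simp

lemma card_matrices
    (hcent : ∀ a : A, star a = a → a ∈ Set.center A)
    (hIstar : ∀ a : A, a ∈ I → star a ∈ I)
    (X : Matrix (Fin m) (Fin m) A)
    (hXs : ∀ k, star (X k k) = X k k)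
    (hXu : ∀ k, IsUnit (X k k)) (hXd : ∀ k l : Fin m, k ≠ l → X k l = 0) :
    Nat.card {M : Matrix (Fin m) (Fin m) A // (∀ k l : Fin m, M k l ∈ I) ∧
        (M.map star).transpose * X + X * M = 0} =
      Nat.card I ^ (m * (m - 1) / 2) *
        Nat.card {a : A // a ∈ I ∧ a + star a = 0} ^ m := by
  classical
  set Y : Fin m → A := fun k => ((hXu k).unit⁻¹ : Aˣ) with hYdef
  have hY1 : ∀ k, X k k * Y k = 1 := fun k => by
    rw [hYdef]; rw [← (hXu k).unit_spec]; exact (hXu k).unit.mul_inv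
  have hY2 : ∀ k, Y k * X k k = 1 := fun k => by
    rw [hYdef]; rw [← (hXu k).unit_spec]; exact (hXu k).unit.inv_mul
  have hYs : ∀ k, star (Y k) * X k k = 1 := fun k => by
    have := congrArg star (hY1 k)
    rwa [star_mul, star_one, hXs] at this
  have hcomm : ∀ (k : Fin m) (c : A), X k k * c = c * X k k := fun k c =>
    (hcent _ (hXs k)).comm c
  have hconstr : ∀ M : Matrix (Fin m) (Fin m) A,
      (M.map star).transpose * X + X * M = 0 ↔
        ∀ i j, star (M j i) * X j j + X i i * M i j = 0 := by
    intro M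
    constructor
    · intro hM i j
      rw [← entry_simp X M hXd i j, hM, Matrix.zero_apply]
    · intro hM
      ext i j
      rw [entry_simp X M hXd i j, hM, Matrix.zero_apply]
  have e : {M : Matrix (Fin m) (Fin m) A // (∀ k l : Fin m, M k l ∈ I) ∧
        (M.map star).transpose * X + X * M = 0} ≃
      (((j : Fin m) × Fin (j : ℕ)) → I) × (Fin m → {a : A // a ∈ I ∧ a + star a = 0}) := by
    refine
      { toFun := fun M =>
          (fun p => ⟨M.1 p.1 ⟨(p.2 : ℕ), p.2.2.trans p.1.2⟩, M.2.1 _ _⟩,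
           fun i => ⟨M.1 i i, M.2.1 i i, ?diag⟩)
        invFun := fun fd =>
          ⟨Matrix.of fun i j =>
            if hji : (j : ℕ) < (i : ℕ) then (fd.1 ⟨i, ⟨(j : ℕ), hji⟩⟩ : A)
            else if hij : (i : ℕ) < (j : ℕ) then
              -(Y i * (star ((fd.1 ⟨j, ⟨(i : ℕ), hij⟩⟩ : A)) * X j j))
            else (fd.2 i : A), ?memI, ?meq⟩
        left_inv := ?linv
        right_inv := ?rinv }
    case diag =>
      have h0 := (hconstr M.1).1 M.2.2 i i
      have h1 : X i i * (star (M.1 i i) + M.1 i i) = 0 := by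
        rw [mul_add, hcomm i (star (M.1 i i))]; exact h0
      have h2 : star (M.1 i i) + M.1 i i = 0 := by
        have := congrArg (fun c => Y i * c) h1
        simpa [← mul_assoc, hY2 i] using this
      rw [add_comm]; exact h2
    case memI =>
      intro k l
      by_cases hlk : (l : ℕ) < (k : ℕ)
      · simp only [Matrix.of_apply, dif_pos hlk]
        exact (fd.1 _).2
      · by_cases hkl : (k : ℕ) < (l : ℕ)
        · simp only [Matrix.of_apply, dif_neg hlk, dif_pos hkl]
          exact I.neg_mem (I.mul_mem_left _ _ (I.mul_mem_right _ _ (hIstar _ (fd.1 _).2)))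
        · simp only [Matrix.of_apply, dif_neg hlk, dif_neg hkl]
          exact (fd.2 k).2.1
    case meq =>
      rw [hconstr]
      intro i j
      rcases lt_trichotomy (i : ℕ) (j : ℕ) with hij | hij | hij
      · have hji : ¬ (j : ℕ) < (i : ℕ) := by omega
        simp only [Matrix.of_apply, dif_pos hij, dif_neg hji]
        rw [mul_neg, ← mul_assoc, hY1, one_mul]
        exact add_neg_cancel _
      · have hii : ¬ (i : ℕ) < (i : ℕ) := by omega
        have hj : i = j := Fin.ext hij
        subst hj
        simp only [Matrix.of_apply, dif_neg hii]
        rw [← hcomm i (star ((fd.2 i : A))), ← mul_add]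
        have hd : star ((fd.2 i : A)) + (fd.2 i : A) = 0 := by
          rw [add_comm]; exact (fd.2 i).2.2
        rw [hd, mul_zero]
      · have hji : ¬ (i : ℕ) < (j : ℕ) := by omega
        simp only [Matrix.of_apply, dif_pos hij, dif_neg hji]
        rw [star_neg, star_mul, star_mul, star_star, hXs, neg_mul, mul_assoc, hYs, mul_one]
        exact neg_add_cancel _
    case linv =>
      intro M
      apply Subtype.ext
      ext i j
      dsimp only
      rcases lt_trichotomy (j : ℕ) (i : ℕ) with hji | hji | hji
      · simp only [Matrix.of_apply, dif_pos hji]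
      · have hii : ¬ (j : ℕ) < (i : ℕ) := by omega
        have hii' : ¬ (i : ℕ) < (j : ℕ) := by omega
        have hj : j = i := Fin.ext hji
        subst hj
        simp only [Matrix.of_apply, dif_neg hii, dif_neg hii']
      · have hji' : ¬ (j : ℕ) < (i : ℕ) := by omega
        simp only [Matrix.of_apply, dif_neg hji', dif_pos hji]
        have h0 := (hconstr M.1).1 M.2.2 i j
        have h1 : X i i * M.1 i j = -(star (M.1 j i) * X j j) :=
          eq_neg_of_add_eq_zero_right h0
        have h2 : M.1 i j = Y i * (X i i * M.1 i j) := by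
          rw [← mul_assoc, hY2, one_mul]
        rw [h2, h1, mul_neg]
    case rinv =>
      intro fd
      refine Prod.ext ?_ ?_
      · funext p
        apply Subtype.ext
        rcases p with ⟨j, i⟩
        have hij : (i : ℕ) < (j : ℕ) := i.2
        simp only [Matrix.of_apply, dif_pos hij]
      · funext i
        apply Subtype.ext
        have hii : ¬ (i : ℕ) < (i : ℕ) := by omega
        simp only [Matrix.of_apply, dif_neg hii]
  rw [Nat.card_congr e, Nat.card_prod]
  congr 1
  · simp only [Nat.card_pi, Finset.prod_const, Finset.card_univ]
    congr 1
    rw [Fintype.card_sigma]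
    simp only [Fintype.card_fin]
    rw [Fin.sum_univ_eq_sum_range (fun i => i) m, Finset.sum_range_id]
  · simp only [Nat.card_pi, Finset.prod_const, Finset.card_univ, Fintype.card_fin]
end Count

set_option maxHeartbeats 2000000 in
/-- Lemma 5.3 and Corollary 5.4: for a `*`-invariant ideal `𝔦` with `𝔦² = 0`, the
kernel of `U → Ū` consists exactly of the maps whose matrix relative to the chosen
basis is `1 + M` with `M` having entries in `𝔦` and `(M*)ᵗ X + X M = 0`; if the Gram
matrix `X` is diagonal with unit entries, this kernel has order
`|𝔦|^(m(m-1)/2) · |𝔨|^m` where `𝔨 = {a ∈ 𝔦 : a + a* = 0}`. -/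
theorem stmt_16 {A V : Type*} [Ring A] [StarRing A] [IsLocalRing A] [Finite A]
    [AddCommGroup V] [Module Aᵐᵒᵖ V]
    (hcent : ∀ a : A, star a = a → a ∈ Set.center A)
    (h2 : IsUnit (2 : A))
    (m : ℕ) (hm : 1 ≤ m) (b : Module.Basis (Fin m) Aᵐᵒᵖ V)
    (h : HermitianForm A V) (hnd : h.Nondeg)
    (I : TwoSidedIdeal A)
    (hIstar : ∀ a : A, a ∈ I → star a ∈ I)
    (hIsq : ∀ a ∈ I, ∀ c ∈ I, a * c = 0)
    (X : Matrix (Fin m) (Fin m) A)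
    (hX : ∀ i j : Fin m, X i j = h.toFun (b i) (b j)) :
    (∀ g : V ≃ₗ[Aᵐᵒᵖ] V,
      ((∀ u v : V, h.toFun (g u) (g v) = h.toFun u v) ∧
        (∀ v : V, g v - v ∈
          Submodule.span Aᵐᵒᵖ {x : V | ∃ a ∈ I, ∃ w : V, x = op a • w})) ↔
      (∃ M : Matrix (Fin m) (Fin m) A, (∀ k l : Fin m, M k l ∈ I) ∧
        (M.map star).transpose * X + X * M = 0 ∧
        ∀ j : Fin m, g (b j) = b j + ∑ k : Fin m, op (M k j) • b k)) ∧
    (((∀ k : Fin m, IsUnit (X k k)) ∧ (∀ k l : Fin m, k ≠ l → X k l = 0)) →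
      Nat.card {g : V ≃ₗ[Aᵐᵒᵖ] V //
          (∀ u v : V, h.toFun (g u) (g v) = h.toFun u v) ∧
          ∀ v : V, g v - v ∈
            Submodule.span Aᵐᵒᵖ {x : V | ∃ a ∈ I, ∃ w : V, x = op a • w}} =
        Nat.card I ^ (m * (m - 1) / 2) *
          Nat.card {a : A // a ∈ I ∧ a + star a = 0} ^ m) := by
  constructor
  · intro g
    exact kernel_iff b h hIstar hIsq X hX g
  · rintro ⟨hXu, hXd⟩
    have hXs : ∀ k, star (X k k) = X k k := fun k => by
      rw [hX k k]; exact (h.conj_symm (b k) (b k)).symm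
    have key : Nat.card {g : V ≃ₗ[Aᵐᵒᵖ] V //
          (∀ u v : V, h.toFun (g u) (g v) = h.toFun u v) ∧
          ∀ v : V, g v - v ∈
            Submodule.span Aᵐᵒᵖ {x : V | ∃ a ∈ I, ∃ w : V, x = op a • w}} =
        Nat.card {M : Matrix (Fin m) (Fin m) A // (∀ k l : Fin m, M k l ∈ I) ∧
          (M.map star).transpose * X + X * M = 0} := by
      symm
      apply Nat.card_eq_of_bijective
        (f := fun M => (⟨(exists_equiv b hIsq M.1 M.2.1).choose,
          (kernel_iff b h hIstar hIsq X hX _).2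
            ⟨M.1, M.2.1, M.2.2, (exists_equiv b hIsq M.1 M.2.1).choose_spec⟩⟩ :
          {g : V ≃ₗ[Aᵐᵒᵖ] V //
            (∀ u v : V, h.toFun (g u) (g v) = h.toFun u v) ∧
            ∀ v : V, g v - v ∈
              Submodule.span Aᵐᵒᵖ {x : V | ∃ a ∈ I, ∃ w : V, x = op a • w}}))
      constructor
      · intro M M' hMM
        have hg : (exists_equiv b hIsq M.1 M.2.1).choose =
            (exists_equiv b hIsq M'.1 M'.2.1).choose := congrArg Subtype.val hMM
        have h1 := (exists_equiv b hIsq M.1 M.2.1).choose_spec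
        have h2 := (exists_equiv b hIsq M'.1 M'.2.1).choose_spec
        apply Subtype.ext
        ext k j
        have hsum : b j + ∑ k, op (M.1 k j) • b k = b j + ∑ k, op (M'.1 k j) • b k := by
          rw [← h1 j, ← h2 j, hg]
        have hsum2 : (∑ k, op (M.1 k j) • b k) = ∑ k, op (M'.1 k j) • b k :=
          add_left_cancel hsum
        have := congrArg (fun v => b.repr v k) hsum2
        simp only [repr_sum_eq b] at this
        exact op_injective this
      · intro g
        obtain ⟨M, hMI, hMeq, hgb⟩ := (kernel_iff b h hIstar hIsq X hX g.1).1 g.2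
        refine ⟨⟨M, hMI, hMeq⟩, ?_⟩
        apply Subtype.ext
        apply LinearEquiv.toLinearMap_injective
        apply b.ext
        intro j
        show (exists_equiv b hIsq M hMI).choose (b j) = g.1 (b j)
        rw [(exists_equiv b hIsq M hMI).choose_spec j, hgb j]
    rw [key]
    exact card_matrices hcent hIstar X hXs hXu hXd
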